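/- Let G be a lex Gröbner basis for the toric ideal I_A with indeterminate ordering x₁ > x₂ > ⋯ > x_d. Then for each i = 1,…,d, the set G ∩ ℚ[x_i,…,x_d] of elements of G involving only the indeterminates x_i,…,x_d is a lex Gröbner basis for the toric ideal I_{A_i} of the submatrix A_i consisting of the last d−i+1 columns of A. -/

import Mathlib

open Matrix MvPolynomial

namespace SIS

variable {r d : ℕ}

/-- The integer matrix obtained from a nonnegative-integer matrix. -/
def intMat (A : Matrix (Fin r) (Fin d) ℕ) : Matrix (Fin r) (Fin d) ℤ :=
  fun i j => (A i j : ℤ)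

/-- The rational matrix obtained from a nonnegative-integer matrix. -/
def ratMat (A : Matrix (Fin r) (Fin d) ℕ) : Matrix (Fin r) (Fin d) ℚ :=
  fun i j => (A i j : ℚ)

def natToInt (v : Fin d → ℕ) : Fin d → ℤ := fun i => (v i : ℤ)

/-- `A⁻¹[t]`: nonnegative integer tables with constraint value `t`. -/
def tables (A : Matrix (Fin r) (Fin d) ℕ) (t : Fin r → ℕ) : Set (Fin d → ℕ) :=
  {n | A.mulVec n = t}

/-- `A_ℚ⁻¹[t]`: nonnegative rational points with constraint value `t`. -/
def ratTables (A : Matrix (Fin r) (Fin d) ℕ) (t : Fin r → ℕ) : Set (Fin d → ℚ) :=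
  {q | (∀ i, 0 ≤ q i) ∧ (ratMat A).mulVec q = fun i => (t i : ℚ)}

/-- ker_ℤ(A). -/
def kerZ (A : Matrix (Fin r) (Fin d) ℕ) : Set (Fin d → ℤ) :=
  {m | (intMat A).mulVec m = 0}

/-- The some nonempty subset of the rows of `A` sums to a strictly positive vector. -/
def RowsPos (A : Matrix (Fin r) (Fin d) ℕ) : Prop :=
  ∃ R : Finset (Fin r), R.Nonempty ∧ ∀ j, 0 < ∑ i ∈ R, A i j

/-- `u` and `v` are connected using moves from `M`, staying componentwise nonnegative. -/
def connects (M : Set (Fin d → ℤ)) (u v : Fin d → ℕ) : Prop :=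
  ∃ l : List (Fin d → ℤ), (∀ m ∈ l, m ∈ M) ∧
    natToInt u = natToInt v + l.sum ∧
    ∀ k, k ≤ l.length → ∀ i, 0 ≤ natToInt v i + (l.take k).sum i

/-- A Markov basis for `A`. -/
def IsMarkovBasis (A : Matrix (Fin r) (Fin d) ℕ) (M : Set (Fin d → ℤ)) : Prop :=
  M.Finite ∧ M ⊆ kerZ A ∧
    ∀ u v : Fin d → ℕ, A.mulVec u = A.mulVec v → connects M u v

/-- A Markov subbasis for `A` and the fixed value `t`. -/
def IsMarkovSubbasis (A : Matrix (Fin r) (Fin d) ℕ) (t : Fin r → ℕ)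
    (M : Set (Fin d → ℤ)) : Prop :=
  M.Finite ∧ M ⊆ kerZ A ∧ ∀ u ∈ tables A t, ∀ v ∈ tables A t, connects M u v

/-- A set of (nonnegative) integers is an interval of integers. -/
def IsIntInterval (S : Set ℕ) : Prop :=
  ∀ a ∈ S, ∀ b ∈ S, ∀ c : ℕ, a ≤ c → c ≤ b → c ∈ S

/-- The set of feasible values of cell `i` given that cells `j < i` are fixed to `w j`;
this is the set `π₁(A_{i}⁻¹[t - Σ_{j<i} w_j a_j])` of the paper. -/
def stepSet (A : Matrix (Fin r) (Fin d) ℕ) (t : Fin r → ℕ) (i : Fin d)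
    (w : Fin d → ℕ) : Set ℕ :=
  {c | ∃ n ∈ tables A t, (∀ j, j < i → n j = w j) ∧ n i = c}

/-- The sequential interval property for `A⁻¹[t]`. -/
def SeqIntervalProperty (A : Matrix (Fin r) (Fin d) ℕ) (t : Fin r → ℕ) : Prop :=
  ∀ i : Fin d, ∀ w : Fin d → ℕ, IsIntInterval (stepSet A t i w)

/-- m⁺. -/
def posPart (m : Fin d → ℤ) : Fin d → ℕ := fun i => (m i).toNat

/-- m⁻. -/
def negPart (m : Fin d → ℤ) : Fin d → ℕ := fun i => (-(m i)).toNat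

/-- The monomial `x^ν`. -/
noncomputable def monom (ν : Fin d → ℕ) : MvPolynomial (Fin d) ℚ :=
  MvPolynomial.monomial (Finsupp.equivFunOnFinite.symm ν) 1

/-- The binomial `x^{m⁺} - x^{m⁻}` of a Markov move `m`. -/
noncomputable def moveBinomial (m : Fin d → ℤ) : MvPolynomial (Fin d) ℚ :=
  monom (posPart m) - monom (negPart m)

/-- The toric ideal `I_A`. -/
noncomputable def toricIdeal (A : Matrix (Fin r) (Fin d) ℕ) : Ideal (MvPolynomial (Fin d) ℚ) :=
  Ideal.span {f | ∃ u v : Fin d → ℕ, A.mulVec u = A.mulVec v ∧ f = monom u - monom v}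

/-- Lexicographic order on exponent vectors with `x₁ > x₂ > ⋯ > x_d`:
`μ <lex ν` iff the first nonzero entry of `ν - μ` is positive. -/
def lexLt (μ ν : Fin d →₀ ℕ) : Prop :=
  ∃ i : Fin d, μ i < ν i ∧ ∀ j, j < i → μ j = ν j

/-- `ν` is the lex-leading exponent of `p`. -/
def IsLexLead (p : MvPolynomial (Fin d) ℚ) (ν : Fin d →₀ ℕ) : Prop :=
  ν ∈ p.support ∧ ∀ μ ∈ p.support, μ ≠ ν → lexLt μ ν

/-- `x^νg` divides `x^νf`. -/
def expDivides (νg νf : Fin d →₀ ℕ) : Prop := ∀ i, νg i ≤ νf i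

/-- `G` is a lex Gröbner basis for `I` (ordering `x₁ > x₂ > ⋯ > x_d`). -/
def IsLexGB (G : Set (MvPolynomial (Fin d) ℚ)) (I : Ideal (MvPolynomial (Fin d) ℚ)) : Prop :=
  G.Finite ∧ (∀ g ∈ G, g ≠ 0 ∧ g ∈ I) ∧
    ∀ f ∈ I, f ≠ 0 → ∃ g ∈ G, ∃ νg νf,
      IsLexLead g νg ∧ IsLexLead f νf ∧ expDivides νg νf

/-- Graded reverse lexicographic order with `x_d > x_{d-1} > ⋯ > x₁`:
`μ <grevlex ν` iff deg μ < deg ν, or degrees agree and the first nonzero entry of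
`ν - μ` (scanning coordinates `1, 2, …, d`) is negative. -/
def grevlexLt (μ ν : Fin d →₀ ℕ) : Prop :=
  (∑ i, μ i) < (∑ i, ν i) ∨
    ((∑ i, μ i) = (∑ i, ν i) ∧ ∃ i : Fin d, ν i < μ i ∧ ∀ j, j < i → μ j = ν j)

/-- `ν` is the grevlex-leading exponent of `p`. -/
def IsGrevlexLead (p : MvPolynomial (Fin d) ℚ) (ν : Fin d →₀ ℕ) : Prop :=
  ν ∈ p.support ∧ ∀ μ ∈ p.support, μ ≠ ν → grevlexLt μ ν

/-- `G` is a grevlex Gröbner basis for `I` (ordering `x_d > ⋯ > x₁`). -/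
def IsGrevlexGB (G : Set (MvPolynomial (Fin d) ℚ)) (I : Ideal (MvPolynomial (Fin d) ℚ)) : Prop :=
  G.Finite ∧ (∀ g ∈ G, g ≠ 0 ∧ g ∈ I) ∧
    ∀ f ∈ I, f ≠ 0 → ∃ g ∈ G, ∃ νg νf,
      IsGrevlexLead g νg ∧ IsGrevlexLead f νf ∧ expDivides νg νf

/-- `p` is square-free in `x_i`. -/
def SquareFreeIn (p : MvPolynomial (Fin d) ℚ) (i : Fin d) : Prop :=
  ∀ ν ∈ p.support, ν i ≤ 1

/-- `p` lies in `ℚ[x_i, …, x_d]`. -/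
def OnlyVarsFrom (p : MvPolynomial (Fin d) ℚ) (i : Fin d) : Prop :=
  ∀ ν ∈ p.support, ∀ j, j < i → ν j = 0

/-- The toric ideal `I_{A_j}` of the submatrix of the last columns, viewed inside
`ℚ[x₁, …, x_d]`. -/
noncomputable def toricIdealFrom (A : Matrix (Fin r) (Fin d) ℕ) (j : Fin d) :
    Ideal (MvPolynomial (Fin d) ℚ) :=
  Ideal.span {f | ∃ u v : Fin d → ℕ, (∀ k, k < j → u k = 0) ∧ (∀ k, k < j → v k = 0) ∧
    A.mulVec u = A.mulVec v ∧ f = monom u - monom v}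


/-- `p` involves only the indeterminates `x_j, …, x_d`. -/
def SupportedFrom (p : MvPolynomial (Fin d) ℚ) (j : Fin d) : Prop :=
  ∀ ν ∈ p.support, ∀ k, k < j → ν k = 0

/-- `G ⊆ ℚ[x_j, …, x_d]` is a lex Gröbner basis (ordering `x_j > ⋯ > x_d`) for
the ideal `I` of `ℚ[x_j, …, x_d]`. -/
def IsLexGBFrom (G : Set (MvPolynomial (Fin d) ℚ)) (j : Fin d)
    (I : Ideal (MvPolynomial (Fin d) ℚ)) : Prop :=
  G.Finite ∧ (∀ g ∈ G, g ≠ 0 ∧ SupportedFrom g j ∧ g ∈ I) ∧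
    ∀ f ∈ I, f ≠ 0 → SupportedFrom f j →
      ∃ g ∈ G, ∃ νg νf, IsLexLead g νg ∧ IsLexLead f νf ∧ expDivides νg νf



def rowMap (A : Matrix (Fin r) (Fin d) ℕ) : (Fin d →₀ ℕ) →+ (Fin r → ℕ) where
  toFun ν := A.mulVec ⇑ν
  map_zero' := by simp
  map_add' x y := by simp [Matrix.mulVec_add]

noncomputable def phi (A : Matrix (Fin r) (Fin d) ℕ) :
    MvPolynomial (Fin d) ℚ →+* AddMonoidAlgebra ℚ (Fin r → ℕ) :=
  AddMonoidAlgebra.mapDomainRingHom ℚ (rowMap A)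

lemma phi_monomial (A : Matrix (Fin r) (Fin d) ℕ) (ν : Fin d →₀ ℕ) (c : ℚ) :
    phi A (monomial ν c) = AddMonoidAlgebra.single (A.mulVec ⇑ν) c := by
  rw [← single_eq_monomial]
  exact AddMonoidAlgebra.mapDomain_single

lemma monom_eq (ν : Fin d →₀ ℕ) : monom (⇑ν) = monomial ν 1 := by
  rw [monom, Finsupp.equivFunOnFinite_symm_coe]

lemma coe_symm (u : Fin d → ℕ) : ⇑(Finsupp.equivFunOnFinite.symm u) = u := rfl

lemma phi_toricIdeal (A : Matrix (Fin r) (Fin d) ℕ) {p : MvPolynomial (Fin d) ℚ}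
    (hp : p ∈ toricIdeal A) : phi A p = 0 := by
  have : toricIdeal A ≤ RingHom.ker (phi A) := by
    rw [toricIdeal, Ideal.span_le]
    rintro x ⟨u, v, huv, rfl⟩
    simp only [SetLike.mem_coe, RingHom.mem_ker, map_sub, monom, phi_monomial, coe_symm, huv,
      sub_self]
  exact this hp

lemma phi_apply (A : Matrix (Fin r) (Fin d) ℕ) (p : MvPolynomial (Fin d) ℚ) (t : Fin r → ℕ) :
    (phi A p).coeff t = ∑ ν ∈ p.support, if A.mulVec ⇑ν = t then coeff ν p else 0 := by
  classical
  have h0 : (phi A p).coeff = Finsupp.mapDomain (fun ν : Fin d →₀ ℕ => A.mulVec ⇑ν) (AddMonoidAlgebra.coeff p) := rfl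
  rw [h0, Finsupp.mapDomain, Finsupp.sum, Finsupp.finset_sum_apply]
  exact Finset.sum_congr rfl fun ν _ => Finsupp.single_apply

lemma key (A : Matrix (Fin r) (Fin d) ℕ) (i : Fin d) :
    ∀ n (p : MvPolynomial (Fin d) ℚ), p.support.card ≤ n →
      phi A p = 0 → SupportedFrom p i → p ∈ toricIdealFrom A i := by
  classical
  intro n
  induction n with
  | zero =>
    intro p hcard _ _
    have : p = 0 := by
      rw [← MvPolynomial.support_eq_empty, ← Finset.card_eq_zero]
      omega
    simp [this]
  | succ n ih =>
    intro p hcard hphi hsupp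
    by_cases hp0 : p = 0
    · simp [hp0]
    · obtain ⟨ν, hν⟩ : p.support.Nonempty := by
        rwa [Finset.nonempty_iff_ne_empty, ne_eq, MvPolynomial.support_eq_empty]
      -- find a second exponent in the same fiber
      have hsum : ∑ σ ∈ p.support, (if A.mulVec ⇑σ = A.mulVec ⇑ν then coeff σ p else 0) = 0 := by
        rw [← phi_apply, hphi]; rfl
      have herase : ∑ σ ∈ p.support.erase ν,
          (if A.mulVec ⇑σ = A.mulVec ⇑ν then coeff σ p else 0) = - coeff ν p := by
        have := Finset.sum_erase_add p.support
          (fun σ => if A.mulVec ⇑σ = A.mulVec ⇑ν then coeff σ p else 0) hν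
        rw [hsum] at this
        simp at this
        linarith
      have hcν : coeff ν p ≠ 0 := (MvPolynomial.mem_support_iff).1 hν
      obtain ⟨μ, hμe, hμne⟩ := Finset.exists_ne_zero_of_sum_ne_zero
        (by rw [herase]; exact neg_ne_zero.2 hcν)
      have hAμν : A.mulVec ⇑μ = A.mulVec ⇑ν := by
        by_contra h; rw [if_neg h] at hμne; exact hμne rfl
      have hμν : μ ≠ ν := (Finset.mem_erase.1 hμe).1
      have hμs : μ ∈ p.support := (Finset.mem_erase.1 hμe).2
      set c := coeff ν p with hc
      set b : MvPolynomial (Fin d) ℚ := monomial ν 1 - monomial μ 1 with hb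
      have hbmem : b ∈ toricIdealFrom A i := by
        apply Ideal.subset_span
        exact ⟨⇑ν, ⇑μ, fun k hk => hsupp ν hν k hk, fun k hk => hsupp μ hμs k hk,
          hAμν.symm, by rw [hb, monom_eq, monom_eq]⟩
      set p' : MvPolynomial (Fin d) ℚ := p - c • b with hp'
      have hsub : p'.support ⊆ p.support.erase ν := by
        intro σ hσ
        have hσc : coeff σ p' ≠ 0 := (MvPolynomial.mem_support_iff).1 hσ
        have hcoeff : coeff σ p' = coeff σ p - c * ((if ν = σ then (1:ℚ) else 0) -
            (if μ = σ then (1:ℚ) else 0)) := by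
          rw [hp', hb]
          simp [MvPolynomial.coeff_sub, MvPolynomial.coeff_smul, MvPolynomial.coeff_monomial,
            mul_sub]
        rcases eq_or_ne σ ν with rfl | hσν
        · exfalso
          rw [hcoeff, if_pos rfl, if_neg hμν] at hσc
          simp [← hc] at hσc
        · refine Finset.mem_erase.2 ⟨hσν, ?_⟩
          rcases eq_or_ne σ μ with rfl | hσμ
          · exact hμs
          · rw [MvPolynomial.mem_support_iff]
            rw [hcoeff, if_neg (Ne.symm hσν), if_neg (Ne.symm hσμ)] at hσc
            simpa using hσc
      have hphib : phi A b = 0 := by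
        rw [hb, map_sub, phi_monomial, phi_monomial, hAμν, sub_self]
      have hphip' : phi A p' = 0 := by
        rw [hp', MvPolynomial.smul_eq_C_mul, map_sub, hphi, _root_.map_mul, hphib, mul_zero, sub_self]
      have hsuppp' : SupportedFrom p' i := fun σ hσ k hk =>
        hsupp σ (Finset.mem_of_mem_erase (hsub hσ)) k hk
      have hcard' : p'.support.card ≤ n := by
        have h1 := Finset.card_le_card hsub
        have h2 := Finset.card_erase_of_mem hν
        have h3 := Finset.card_pos.2 ⟨ν, hν⟩
        omega
      have hp'mem := ih p' hcard' hphip' hsuppp'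
      have : p = p' + C c * b := by rw [hp', MvPolynomial.smul_eq_C_mul]; ring
      rw [this]
      exact Ideal.add_mem _ hp'mem (Ideal.mul_mem_left _ _ hbmem)

lemma toricIdealFrom_le (A : Matrix (Fin r) (Fin d) ℕ) (i : Fin d) :
    toricIdealFrom A i ≤ toricIdeal A := by
  apply Ideal.span_mono
  rintro x ⟨u, v, _, _, huv, rfl⟩
  exact ⟨u, v, huv, rfl⟩

lemma supportedFrom_of_lead {g : MvPolynomial (Fin d) ℚ} {νg : Fin d →₀ ℕ} {i : Fin d}
    (hlead : IsLexLead g νg) (h0 : ∀ k, k < i → νg k = 0) : SupportedFrom g i := by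
  intro μ hμ k hk
  rcases eq_or_ne μ νg with rfl | hne
  · exact h0 k hk
  · obtain ⟨j, hj1, hj2⟩ := hlead.2 μ hμ hne
    have hij : i ≤ j := by
      by_contra h
      push_neg at h
      have := h0 j h
      omega
    rw [hj2 k (lt_of_lt_of_le hk hij), h0 k hk]

/-- elimination. If `G` is a lex Gröbner basis for `I_A` with
`x₁ > x₂ > ⋯ > x_d`, then for each `i` the set `G ∩ ℚ[x_i, …, x_d]` is a lex
Gröbner basis for the toric ideal `I_{A_i}` of the submatrix `A_i` of the last
`d - i + 1` columns of `A`. -/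
theorem elimination_lexGB {r d : ℕ}
    (A : Matrix (Fin r) (Fin d) ℕ) (hA : RowsPos A)
    (G : Set (MvPolynomial (Fin d) ℚ)) (hGB : IsLexGB G (toricIdeal A))
    (i : Fin d) :
    IsLexGBFrom {g ∈ G | SupportedFrom g i} i (toricIdealFrom A i) := by
  obtain ⟨hfin, hmem, hdiv⟩ := hGB
  refine ⟨hfin.subset (Set.sep_subset _ _), ?_, ?_⟩
  · rintro g ⟨hgG, hgsupp⟩
    obtain ⟨hg0, hgI⟩ := hmem g hgG
    exact ⟨hg0, hgsupp, key A i g.support.card g le_rfl (phi_toricIdeal A hgI) hgsupp⟩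
  · intro f hf hf0 hfsupp
    obtain ⟨g, hgG, νg, νf, hgl, hfl, hdvd⟩ := hdiv f (toricIdealFrom_le A i hf) hf0
    have hνf0 : ∀ k, k < i → νf k = 0 := fun k hk => hfsupp νf hfl.1 k hk
    have hνg0 : ∀ k, k < i → νg k = 0 := fun k hk =>
      Nat.le_zero.1 (hνf0 k hk ▸ hdvd k)
    exact ⟨g, ⟨hgG, supportedFrom_of_lead hgl hνg0⟩, νg, νf, hgl, hfl, hdvd⟩


end SIS
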